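/- Let x ∈ C, d ≠ 0, t > 0 with x + t d ∈ C, ξ ∈ ∂g(x), and constants 0 < c₂ < 1, M₁ > 0, λ > 0, σ > 0. Suppose: (a) ‖∇f(x + t d) − ∇f(x)‖ ≤ M₁ t ‖d‖ (local Lipschitz bound on ∇f along the step); (b) the Wolfe condition ⟨∇f(x + t d) + ξ, d⟩ > c₂⟨∇f(x) + ξ, d⟩ holds; and (c) ⟨−∇f(x) − ξ, d⟩ ≥ (σ/λ)‖d‖². Then t ≥ (1 − c₂)σ/(M₁ λ) > 0. -/

import Mathlib

open Set Filter Topology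
open scoped RealInnerProductSpace

/-- The convex subdifferential of `g + δ_S` at `x`. -/
def subdiffWithin {E : Type*} [NormedAddCommGroup E] [InnerProductSpace ℝ E]
    (g : E → ℝ) (S : Set E) (x : E) : Set E :=
  {ξ | ∀ y ∈ S, g x + ⟪ξ, y - x⟫ ≤ g y}

/-- lower bound on the step-size from the Wolfe condition. -/
theorem stmt5
    {E : Type*} [NormedAddCommGroup E] [InnerProductSpace ℝ E] [FiniteDimensional ℝ E]
    (C : Set E) (hCne : C.Nonempty) (hCopen : IsOpen C) (hCconv : Convex ℝ C)
    (f g : E → ℝ) (f' : E → E)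
    (hf'grad : ∀ z ∈ C, HasGradientAt f (f' z) z)
    (hf'cont : ContinuousOn f' C)
    (hgconv : ConvexOn ℝ Set.univ g) (hglsc : LowerSemicontinuous g)
    (x d : E) (hx : x ∈ C) (hdne : d ≠ 0)
    (t : ℝ) (ht : 0 < t) (htC : x + t • d ∈ C)
    (ξ : E) (hξ : ξ ∈ subdiffWithin g Set.univ x)
    (c₂ M₁ lam σ : ℝ) (hc₂ : 0 < c₂) (hc₂' : c₂ < 1)
    (hM₁ : 0 < M₁) (hlam : 0 < lam) (hσ : 0 < σ)
    (hLip : ‖f' (x + t • d) - f' x‖ ≤ M₁ * t * ‖d‖)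
    (hWolfe : c₂ * ⟪f' x + ξ, d⟫ < ⟪f' (x + t • d) + ξ, d⟫)
    (hdir : (σ / lam) * ‖d‖ ^ 2 ≤ ⟪-f' x - ξ, d⟫) :
    (1 - c₂) * σ / (M₁ * lam) ≤ t ∧ 0 < (1 - c₂) * σ / (M₁ * lam) := by

  have hd2 : 0 < ‖d‖ ^ 2 := pow_pos (norm_pos_iff.mpr hdne) 2
  have h1 : ⟪f' (x + t • d) - f' x, d⟫ ≤ M₁ * t * ‖d‖ ^ 2 := by
    calc ⟪f' (x + t • d) - f' x, d⟫ ≤ ‖f' (x + t • d) - f' x‖ * ‖d‖ :=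
          real_inner_le_norm _ _
      _ ≤ (M₁ * t * ‖d‖) * ‖d‖ := by
          apply mul_le_mul_of_nonneg_right hLip (norm_nonneg d)
      _ = M₁ * t * ‖d‖ ^ 2 := by ring
  have h2 : ⟪-f' x - ξ, d⟫ = -⟪f' x + ξ, d⟫ := by
    rw [show -f' x - ξ = -(f' x + ξ) by abel, inner_neg_left]
  have h3 : ⟪f' (x + t • d) - f' x, d⟫
      = ⟪f' (x + t • d) + ξ, d⟫ - ⟪f' x + ξ, d⟫ := by
    rw [inner_sub_left, inner_add_left, inner_add_left]; ring
  have h4 : (1 - c₂) * ((σ / lam) * ‖d‖ ^ 2) < M₁ * t * ‖d‖ ^ 2 := by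
    have hdir' : ⟪f' x + ξ, d⟫ ≤ -((σ / lam) * ‖d‖ ^ 2) := by
      rw [h2] at hdir; linarith
    nlinarith [h1, hWolfe, h3]
  have h5 : (1 - c₂) * (σ / lam) < M₁ * t := by
    have := (mul_lt_mul_iff_of_pos_right hd2).mp (by nlinarith [h4] : ((1 - c₂) * (σ / lam)) * ‖d‖ ^ 2 < (M₁ * t) * ‖d‖ ^ 2)
    exact this
  have hpos : 0 < (1 - c₂) * σ / (M₁ * lam) :=
    div_pos (mul_pos (by linarith) hσ) (mul_pos hM₁ hlam)
  refine ⟨?_, hpos⟩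
  rw [div_le_iff₀ (mul_pos hM₁ hlam)]
  have h6 := mul_lt_mul_of_pos_right h5 hlam
  have hl : lam ≠ 0 := ne_of_gt hlam
  field_simp at h6
  nlinarith [h6]
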